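/- arXiv:2008.12081 — 2 statements merged into one kernel-verified Lean document; each statement's English description precedes it below -/
import Mathlib

section
/- The logarithmic derivative of a lower-triangular unipotent matrix over a differential field is strictly lower triangular, and the logarithmic derivative of an invertible diagonal matrix is diagonal. More generally, for a linear algebraic group G ⊆ GLₙ defined over the constants, ℓδ maps G(F) into the Lie algebra 𝔤(F). -/
/-- The logarithmic derivative `ℓδ(g) = ∂(g)·g⁻¹` maps a linear algebraic group
into its Lie algebra; concretely: `ℓδ` of a lower-triangular unipotent matrix is
strictly lower triangular, and `ℓδ` of an invertible diagonal matrix is diagonal. -/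
theorem logDeriv_into_lieAlgebra {F : Type*} [Field F] (D : F → F)
    (hadd : ∀ a b : F, D (a + b) = D a + D b)
    (hmul : ∀ a b : F, D (a * b) = a * D b + D a * b) {n : ℕ} :
    (∀ u : Matrix (Fin n) (Fin n) F,
        (∀ i j : Fin n, i < j → u i j = 0) → (∀ i, u i i = 1) →
        ∀ i j : Fin n, i ≤ j → ((u.map D) * u⁻¹) i j = 0) ∧
    (∀ d : Fin n → F, (∀ i, d i ≠ 0) →
        ∀ i j : Fin n, i ≠ j →
          (((Matrix.diagonal d).map D) * (Matrix.diagonal d)⁻¹) i j = 0) := by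
  have hD0 : D 0 = 0 := by
    have := hadd 0 0
    simp at this
    exact this
  have hD1 : D 1 = 0 := by
    have := hmul 1 1
    simp at this
    exact this
  constructor
  · intro u hlow hdiag i j hij
    -- u is lower block triangular
    have hu : u.BlockTriangular OrderDual.toDual := by
      intro a b h
      exact hlow a b h
    have hdet : u.det = 1 := by
      rw [Matrix.det_of_lowerTriangular u hu]
      simp [hdiag]
    have : Invertible u := u.invertibleOfIsUnitDet (by simp [hdet])
    have hinv : u⁻¹.BlockTriangular OrderDual.toDual :=
      Matrix.blockTriangular_inv_of_blockTriangular hu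
    -- (u.map D) is strictly lower triangular
    have hmapD : ∀ a b : Fin n, a ≤ b → (u.map D) a b = 0 := by
      intro a b hab
      rcases lt_or_eq_of_le hab with h | h
      · simp [Matrix.map_apply, hlow a b h, hD0]
      · subst h; simp [Matrix.map_apply, hdiag a, hD1]
    rw [Matrix.mul_apply]
    apply Finset.sum_eq_zero
    intro k _
    rcases le_or_gt i k with h | h
    · rw [hmapD i k h, zero_mul]
    · rw [hinv (show OrderDual.toDual j < OrderDual.toDual k from h.trans_le hij),
        mul_zero]
  · intro d hd i j hij
    rw [Matrix.inv_diagonal, Matrix.mul_apply]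
    apply Finset.sum_eq_zero
    intro k _
    rcases eq_or_ne k j with h | h
    · subst h
      simp [Matrix.map_apply, Matrix.diagonal_apply_ne _ (by exact fun h => hij h : i ≠ k), hD0]
    · simp [Matrix.diagonal_apply_ne _ h]
end

section
/- In 𝔰𝔩₄ over a field of characteristic 0, with Xᵢ = Eᵢ₊₁,ᵢ (i = 1,2,3) the standard negative simple root vectors, the logarithmic derivative of the product u₁(η₁)u₂(η₂)u₃(η₃) = (I+η₁X₁)(I+η₂X₂)(I+η₃X₃) over a differential field F is η₁′X₁ + η₂′X₂ + η₃′X₃ - η₁η₂′·E₃₁ - η₂η₃′·E₄₂ + (η₁η₂η₃′)·E₄₁, for any η₁, η₂, η₃ ∈ F. -/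
/-- the 4×4 matrix unit `Eᵢⱼ` -/
def E4 {F : Type*} [Field F] (i j : Fin 4) : Matrix (Fin 4) (Fin 4) F :=
  Matrix.single i j 1

set_option maxHeartbeats 1600000 in
/-- In `𝔰𝔩₄` over a differential field, with `Xᵢ = Eᵢ₊₁,ᵢ` the negative simple root
vectors and `uᵢ(η) = I + η·Xᵢ`, the logarithmic derivative of `u₁(η₁)u₂(η₂)u₃(η₃)`
equals `η₁′X₁ + η₂′X₂ + η₃′X₃ - η₁η₂′·E₃₁ - η₂η₃′·E₄₂ + η₁η₂η₃′·E₄₁`. -/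
theorem logDeriv_sl4_unipotent_product {F : Type*} [Field F] (D : F → F)
    (hadd : ∀ a b : F, D (a + b) = D a + D b)
    (hmul : ∀ a b : F, D (a * b) = a * D b + D a * b)
    (η₁ η₂ η₃ : F) :
    (((1 + η₁ • E4 1 0) * (1 + η₂ • E4 2 1) * (1 + η₃ • E4 3 2) :
        Matrix (Fin 4) (Fin 4) F).map D) *
      ((1 + η₁ • E4 1 0) * (1 + η₂ • E4 2 1) * (1 + η₃ • E4 3 2) :
        Matrix (Fin 4) (Fin 4) F)⁻¹ =
    D η₁ • E4 1 0 + D η₂ • E4 2 1 + D η₃ • E4 3 2 -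
      (η₁ * D η₂) • E4 2 0 - (η₂ * D η₃) • E4 3 1 + (η₁ * η₂ * D η₃) • E4 3 0 := by
  have h0 : D 0 = 0 := by
    have h := hadd 0 0; simp only [add_zero] at h
    exact (add_eq_left.mp h.symm)
  have h1 : D 1 = 0 := by
    have h := hmul 1 1; simp only [one_mul, mul_one] at h
    exact (add_eq_left.mp h.symm)
  have hMeq : ((1 + η₁ • E4 1 0) * (1 + η₂ • E4 2 1) * (1 + η₃ • E4 3 2) :
      Matrix (Fin 4) (Fin 4) F) =
      !![1,0,0,0; η₁,1,0,0; 0,η₂,1,0; 0,0,η₃,1] := by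
    ext i j
    fin_cases i <;> fin_cases j <;>
      simp [E4, Matrix.mul_apply, Fin.sum_univ_four, Matrix.single,
        Matrix.one_apply, Matrix.vecHead, Matrix.vecTail]
  have hNeq : (!![1,0,0,0; η₁,1,0,0; 0,η₂,1,0; 0,0,η₃,1] :
      Matrix (Fin 4) (Fin 4) F) *
      !![1,0,0,0; -η₁,1,0,0; η₁*η₂,-η₂,1,0; -(η₁*η₂*η₃),η₂*η₃,-η₃,1] = 1 := by
    ext i j
    fin_cases i <;> fin_cases j <;>
      simp [Matrix.mul_apply, Fin.sum_univ_four, Matrix.one_apply, Matrix.vecHead, Matrix.vecTail] <;> ring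
  have hMap : (!![1,0,0,0; η₁,1,0,0; 0,η₂,1,0; 0,0,η₃,1] :
      Matrix (Fin 4) (Fin 4) F).map D =
      !![0,0,0,0; D η₁,0,0,0; 0,D η₂,0,0; 0,0,D η₃,0] := by
    ext i j
    fin_cases i <;> fin_cases j <;> simp [Matrix.map_apply, Matrix.vecHead, Matrix.vecTail, h0, h1]
  rw [hMeq, Matrix.inv_eq_right_inv hNeq, hMap]
  ext i j
  fin_cases i <;> fin_cases j <;>
    (simp only [Matrix.add_apply, Matrix.sub_apply, Matrix.smul_apply, smul_eq_mul];
     simp [E4, Matrix.mul_apply, Fin.sum_univ_four, Matrix.single,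
       Matrix.one_apply, Matrix.vecHead, Matrix.vecTail]) <;> ring
end
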